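/- arXiv:1906.10465 — 2 statements merged into one kernel-verified Lean document; each statement's English description precedes it below -/
import Mathlib

section
/- Let δ_k, θ_k (1 ≤ k ≤ n) be independent real random variables with E[δ_k] = E[θ_k] = 0 and |δ_k|, |θ_k| ≤ u almost surely. Then for any 0 < δ < 1, with probability at least 1 − δ, |x̂^T ŷ − x^T y| ≤ ‖x∘y‖_2 · √(2 ln(2/δ)) · u(2+u). -/
open MeasureTheory ProbabilityTheory Real

lemma my_integrable_of_ae_bound {Ω : Type*} [MeasurableSpace Ω] {μ : Measure Ω}
    [IsFiniteMeasure μ] {Z : Ω → ℝ} (hZ : AEStronglyMeasurable Z μ) {C : ℝ}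
    (h : ∀ᵐ ω ∂μ, |Z ω| ≤ C) : Integrable Z μ :=
  (integrable_const C).mono' hZ (by
    filter_upwards [h] with ω hω
    rwa [Real.norm_eq_abs])

lemma my_hoeffding_mgf {Ω : Type*} [MeasurableSpace Ω] {μ : Measure Ω}
    [IsProbabilityMeasure μ] {Z : Ω → ℝ} (hZm : Measurable Z) {c : ℝ}
    (hbdd : ∀ᵐ ω ∂μ, |Z ω| ≤ c) (hmean : ∫ ω, Z ω ∂μ = 0) (t : ℝ) :
    mgf Z μ t ≤ Real.exp (t ^ 2 * c ^ 2 / 2) := by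
  have hc : 0 ≤ c := by
    obtain ⟨ω, hω⟩ := hbdd.exists
    exact le_trans (abs_nonneg _) hω
  have hZint : Integrable Z μ := my_integrable_of_ae_bound hZm.aestronglyMeasurable hbdd
  have hexp_int : Integrable (fun ω => Real.exp (t * Z ω)) μ := by
    refine my_integrable_of_ae_bound (Real.measurable_exp.comp (hZm.const_mul t)).aestronglyMeasurable (C := Real.exp (|t| * c)) ?_
    filter_upwards [hbdd] with ω hω
    rw [abs_of_nonneg (Real.exp_pos _).le]
    refine Real.exp_le_exp.2 ?_
    calc t * Z ω ≤ |t * Z ω| := le_abs_self _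
    _ = |t| * |Z ω| := abs_mul _ _
    _ ≤ |t| * c := by gcongr
  rcases eq_or_lt_of_le hc with hc0 | hc0
  · have hZ0 : ∀ᵐ ω ∂μ, Z ω = 0 := by
      filter_upwards [hbdd] with ω hω
      rw [← hc0] at hω
      exact abs_eq_zero.1 (le_antisymm hω (abs_nonneg _))
    have hae : (fun ω => Real.exp (t * Z ω)) =ᵐ[μ] fun _ => (1:ℝ) := by
      filter_upwards [hZ0] with ω hω
      simp [hω]
    have : mgf Z μ t = 1 := by
      rw [mgf, integral_congr_ae hae, integral_const]
      simp
    rw [this]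
    exact Real.one_le_exp (by positivity)
  · -- c > 0
    set A : ℝ := (Real.exp (t * c) + Real.exp (-(t * c))) / 2 with hA
    set B : ℝ := (Real.exp (t * c) - Real.exp (-(t * c))) / (2 * c) with hB
    have key : ∀ᵐ ω ∂μ, Real.exp (t * Z ω) ≤ A + Z ω * B := by
      filter_upwards [hbdd] with ω hω
      have h1 : -c ≤ Z ω := neg_le_of_abs_le hω
      have h2 : Z ω ≤ c := le_of_abs_le hω
      have ha : (0:ℝ) ≤ (c - Z ω) / (2 * c) := by
        apply div_nonneg (by linarith) (by linarith)
      have hb : (0:ℝ) ≤ (c + Z ω) / (2 * c) := by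
        apply div_nonneg (by linarith) (by linarith)
      have hab : (c - Z ω) / (2 * c) + (c + Z ω) / (2 * c) = 1 := by
        field_simp
        ring
      have := convexOn_exp.2 (Set.mem_univ (-(t*c))) (Set.mem_univ (t*c)) ha hb hab
      have h2c : (2*c) ≠ 0 := by positivity
      have harg : ((c - Z ω) / (2 * c)) • (-(t*c)) + ((c + Z ω) / (2 * c)) • (t*c)
          = t * Z ω := by
        simp only [smul_eq_mul]
        rw [div_mul_eq_mul_div, div_mul_eq_mul_div, ← add_div,
          div_eq_iff h2c]
        ring
      rw [harg] at this
      refine this.trans (le_of_eq ?_)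
      rw [smul_eq_mul, smul_eq_mul, hA, hB]
      field_simp
      ring
    have hint : mgf Z μ t ≤ ∫ ω, (A + Z ω * B) ∂μ := by
      refine integral_mono_ae hexp_int ?_ key
      exact (integrable_const A).add (hZint.mul_const B)
    have heq : ∫ ω, (A + Z ω * B) ∂μ = A := by
      rw [integral_add (integrable_const A) (hZint.mul_const B),
        integral_mul_const, hmean]
      simp
    have hcosh : A = Real.cosh (t * c) := by rw [Real.cosh_eq, hA]
    calc mgf Z μ t ≤ A := hint.trans_eq heq
    _ = Real.cosh (t * c) := hcosh
    _ ≤ Real.exp ((t * c) ^ 2 / 2) := Real.cosh_le_exp_half_sq _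
    _ = Real.exp (t ^ 2 * c ^ 2 / 2) := by ring_nf

lemma my_indep_sum {Ω : Type*} [MeasurableSpace Ω] {μ : Measure Ω} [IsProbabilityMeasure μ]
    {n : ℕ} (δ θ : Fin n → Ω → ℝ)
    (hmeasδ : ∀ k, Measurable (δ k)) (hmeasθ : ∀ k, Measurable (θ k))
    (hindep : iIndepFun
      (Sum.elim δ θ : Fin n ⊕ Fin n → Ω → ℝ) μ)
    (g : Fin n → ℝ → ℝ → ℝ) (hg : ∀ k, Measurable (fun p : ℝ × ℝ => g k p.1 p.2))
    (s : Finset (Fin n)) (k : Fin n) (hk : k ∉ s) :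
    IndepFun (fun ω => ∑ j ∈ s, g j (δ j ω) (θ j ω))
      (fun ω => g k (δ k ω) (θ k ω)) μ := by
  classical
  set f : Fin n ⊕ Fin n → Ω → ℝ := Sum.elim δ θ with hf
  have hfm : ∀ i, Measurable (f i) := by
    rintro (j | j)
    · exact hmeasδ j
    · exact hmeasθ j
  set S : Finset (Fin n ⊕ Fin n) := s.image Sum.inl ∪ s.image Sum.inr with hS
  set T : Finset (Fin n ⊕ Fin n) := {Sum.inl k, Sum.inr k} with hT
  have hST : Disjoint S T := by
    rw [Finset.disjoint_left]
    intro i hiS hiT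
    simp only [hS, hT, Finset.mem_union, Finset.mem_image, Finset.mem_insert,
      Finset.mem_singleton] at hiS hiT
    rcases hiS with ⟨j, hj, rfl⟩ | ⟨j, hj, rfl⟩ <;> rcases hiT with h | h <;>
      simp_all [Sum.inl.injEq, Sum.inr.injEq]
  have h := hindep.indepFun_finset S T hST hfm
  have hmem1 : ∀ j ∈ s, Sum.inl j ∈ S := fun j hj =>
    Finset.mem_union_left _ (Finset.mem_image_of_mem _ hj)
  have hmem2 : ∀ j ∈ s, Sum.inr j ∈ S := fun j hj =>
    Finset.mem_union_right _ (Finset.mem_image_of_mem _ hj)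
  have hkT1 : Sum.inl k ∈ T := by simp [hT]
  have hkT2 : Sum.inr k ∈ T := by simp [hT]
  set gS : ((i : S) → ℝ) → ℝ := fun v =>
    ∑ j ∈ s.attach, g j (v ⟨Sum.inl j, hmem1 j j.2⟩) (v ⟨Sum.inr j, hmem2 j j.2⟩)
    with hgS
  set gT : ((i : T) → ℝ) → ℝ := fun v => g k (v ⟨Sum.inl k, hkT1⟩) (v ⟨Sum.inr k, hkT2⟩)
    with hgT
  have hgSm : Measurable gS := by
    apply Finset.measurable_sum
    intro j _
    have hpair : Measurable fun v : (i : S) → ℝ =>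
        (v ⟨Sum.inl j, hmem1 j j.2⟩, v ⟨Sum.inr j, hmem2 j j.2⟩) :=
      (measurable_pi_apply _).prodMk (measurable_pi_apply _)
    exact (hg j).comp hpair
  have hgTm : Measurable gT := by
    have hpair : Measurable fun v : (i : T) → ℝ =>
        (v ⟨Sum.inl k, hkT1⟩, v ⟨Sum.inr k, hkT2⟩) :=
      (measurable_pi_apply _).prodMk (measurable_pi_apply _)
    exact (hg k).comp hpair
  have hcomp1 : (gS ∘ fun a (i : S) => f i a)
      = fun ω => ∑ j ∈ s, g j (δ j ω) (θ j ω) := by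
    funext a
    simp only [Function.comp_apply, hgS]
    exact Finset.sum_attach s (fun j => g j (δ j a) (θ j a))
  have hcomp2 : (gT ∘ fun a (i : T) => f i a)
      = fun ω => g k (δ k ω) (θ k ω) := rfl
  rw [← hcomp1, ← hcomp2]
  exact h.comp hgSm hgTm

lemma my_chernoff {Ω : Type*} [MeasurableSpace Ω] {μ : Measure Ω} [IsProbabilityMeasure μ]
    {S : Ω → ℝ} {C T : ℝ} (hC : 0 < C) (hT : 0 ≤ T)
    (hint : Integrable (fun ω => Real.exp ((T / C) * S ω)) μ)
    (hmgf : mgf S μ (T / C) ≤ Real.exp ((T / C) ^ 2 * C / 2)) :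
    (μ {ω | T ≤ S ω}).toReal ≤ Real.exp (-(T ^ 2 / (2 * C))) := by
  have h := measure_ge_le_exp_mul_mgf (μ := μ) (X := S) T (by positivity) hint
  refine h.trans ?_
  calc Real.exp (-(T / C) * T) * mgf S μ (T / C)
      ≤ Real.exp (-(T / C) * T) * Real.exp ((T / C) ^ 2 * C / 2) := by
        exact mul_le_mul_of_nonneg_left hmgf (Real.exp_pos _).le
    _ = Real.exp (-(T / C) * T + (T / C) ^ 2 * C / 2) := (Real.exp_add _ _).symm
    _ = Real.exp (-(T ^ 2 / (2 * C))) := by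
        congr 1
        field_simp
        ring

theorem probabilistic_perturbation_bound
    {Ω : Type*} [MeasurableSpace Ω] (μ : Measure Ω) [IsProbabilityMeasure μ]
    (n : ℕ) (x y : Fin n → ℝ) (u : ℝ) (hu : 0 < u)
    (δ θ : Fin n → Ω → ℝ)
    (hmeasδ : ∀ k, Measurable (δ k)) (hmeasθ : ∀ k, Measurable (θ k))
    (hindep : iIndepFun
      (Sum.elim δ θ : Fin n ⊕ Fin n → Ω → ℝ) μ)
    (hmeanδ : ∀ k, ∫ ω, δ k ω ∂μ = 0) (hmeanθ : ∀ k, ∫ ω, θ k ω ∂μ = 0)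
    (hbddδ : ∀ k, ∀ᵐ ω ∂μ, |δ k ω| ≤ u) (hbddθ : ∀ k, ∀ᵐ ω ∂μ, |θ k ω| ≤ u)
    (ε : ℝ) (hε0 : 0 < ε) (hε1 : ε < 1) :
    ENNReal.ofReal (1 - ε) ≤
      μ {ω | |(∑ k, ((1 + δ k ω) * x k) * ((1 + θ k ω) * y k)) - ∑ k, x k * y k| ≤
        Real.sqrt (∑ k, (x k * y k) ^ 2) * Real.sqrt (2 * Real.log (2 / ε)) *
          (u * (2 + u))} := by
  classical
  have hK : 0 < u * (2 + u) := by nlinarith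
  have hL : 0 ≤ 2 * Real.log (2 / ε) := by
    have : (1 : ℝ) ≤ 2 / ε := by
      rw [le_div_iff₀ hε0]; linarith
    have := Real.log_nonneg this
    linarith
  set g : Fin n → ℝ → ℝ → ℝ := fun k a b => x k * y k * (a + b + a * b) with hgdef
  have hg : ∀ k, Measurable (fun p : ℝ × ℝ => g k p.1 p.2) := fun k =>
    (((measurable_fst.add measurable_snd).add
      (measurable_fst.mul measurable_snd)).const_mul _)
  set X : Fin n → Ω → ℝ := fun k ω => g k (δ k ω) (θ k ω) with hXdef
  have hXm : ∀ k, Measurable (X k) := fun k =>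
    (hg k).comp ((hmeasδ k).prodMk (hmeasθ k))
  set c : Fin n → ℝ := fun k => |x k * y k| * (u * (2 + u)) with hcdef
  -- pointwise rewriting of the sum
  set S : Ω → ℝ := fun ω => ∑ k, X k ω with hSdef
  have hSm : Measurable S := Finset.measurable_sum _ fun k _ => hXm k
  have hptw : ∀ ω, (∑ k, ((1 + δ k ω) * x k) * ((1 + θ k ω) * y k)) - ∑ k, x k * y k
      = S ω := by
    intro ω
    rw [hSdef, ← Finset.sum_sub_distrib]
    exact Finset.sum_congr rfl fun k _ => by simp only [hXdef, hgdef]; ring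
  -- bounds
  have hXbdd : ∀ k, ∀ᵐ ω ∂μ, |X k ω| ≤ c k := by
    intro k
    filter_upwards [hbddδ k, hbddθ k] with ω h1 h2
    have habs : |δ k ω + θ k ω + δ k ω * θ k ω| ≤ u * (2 + u) := by
      calc |δ k ω + θ k ω + δ k ω * θ k ω|
          ≤ |δ k ω + θ k ω| + |δ k ω * θ k ω| := abs_add_le _ _
        _ ≤ (|δ k ω| + |θ k ω|) + |δ k ω| * |θ k ω| := by
            rw [abs_mul]; gcongr; exact abs_add_le _ _
        _ ≤ (u + u) + u * u := by
            gcongr <;> first | exact h1 | exact h2 | exact abs_nonneg _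
        _ = u * (2 + u) := by ring
    calc |X k ω| = |x k * y k| * |δ k ω + θ k ω + δ k ω * θ k ω| := by
          rw [hXdef, hgdef]; exact abs_mul _ _
      _ ≤ |x k * y k| * (u * (2 + u)) :=
          mul_le_mul_of_nonneg_left habs (abs_nonneg _)
  -- integrability
  have hδint : ∀ k, Integrable (δ k) μ := fun k =>
    my_integrable_of_ae_bound (hmeasδ k).aestronglyMeasurable (hbddδ k)
  have hθint : ∀ k, Integrable (θ k) μ := fun k =>
    my_integrable_of_ae_bound (hmeasθ k).aestronglyMeasurable (hbddθ k)
  have hδθint : ∀ k, Integrable (fun ω => δ k ω * θ k ω) μ := by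
    intro k
    refine my_integrable_of_ae_bound ((hmeasδ k).mul (hmeasθ k)).aestronglyMeasurable
      (C := u * u) ?_
    filter_upwards [hbddδ k, hbddθ k] with ω h1 h2
    rw [abs_mul]
    exact mul_le_mul h1 h2 (abs_nonneg _) hu.le
  -- mean zero
  have hXmean : ∀ k, ∫ ω, X k ω ∂μ = 0 := by
    intro k
    have hkk : IndepFun (δ k) (θ k) μ :=
      hindep.indepFun (show (Sum.inl k : Fin n ⊕ Fin n) ≠ Sum.inr k by simp)
    have hmul : ∫ ω, δ k ω * θ k ω ∂μ = 0 := by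
      have h := hkk.integral_mul_eq_mul_integral (hmeasδ k).aestronglyMeasurable
        (hmeasθ k).aestronglyMeasurable
      rw [show (fun ω => δ k ω * θ k ω) = δ k * θ k from rfl, h, hmeanδ k, hmeanθ k,
        mul_zero]
    have hadd : Integrable (fun ω => δ k ω + θ k ω) μ := (hδint k).add (hθint k)
    have h1 : ∫ ω, (δ k ω + θ k ω + δ k ω * θ k ω) ∂μ = 0 := by
      rw [show (fun ω => δ k ω + θ k ω + δ k ω * θ k ω)
          = fun ω => (fun ω' => δ k ω' + θ k ω') ω + (fun ω' => δ k ω' * θ k ω') ω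
          from rfl,
        integral_add hadd (hδθint k),
        integral_add (hδint k) (hθint k), hmeanδ k, hmeanθ k, hmul]
      ring
    calc ∫ ω, X k ω ∂μ = (x k * y k) * ∫ ω, (δ k ω + θ k ω + δ k ω * θ k ω) ∂μ :=
        integral_const_mul _ _
      _ = 0 := by rw [h1, mul_zero]
  -- per-variable mgf bound
  have hXmgf : ∀ k t, mgf (X k) μ t ≤ Real.exp (t ^ 2 * (c k) ^ 2 / 2) := fun k t =>
    my_hoeffding_mgf (hXm k) (hXbdd k) (hXmean k) t
  -- integrability of exp(t * S)
  set R : ℝ := ∑ k, c k with hRdef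
  have hSbdd : ∀ᵐ ω ∂μ, |S ω| ≤ R := by
    have hall := (MeasureTheory.ae_all_iff).2 hXbdd
    filter_upwards [hall] with ω hω
    calc |S ω| ≤ ∑ k, |X k ω| := Finset.abs_sum_le_sum_abs _ _
      _ ≤ ∑ k, c k := Finset.sum_le_sum fun k _ => hω k
  have hSint : ∀ t : ℝ, Integrable (fun ω => Real.exp (t * S ω)) μ := by
    intro t
    refine my_integrable_of_ae_bound
      (Real.measurable_exp.comp (hSm.const_mul t)).aestronglyMeasurable
      (C := Real.exp (|t| * R)) ?_
    filter_upwards [hSbdd] with ω hω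
    rw [abs_of_nonneg (Real.exp_pos _).le]
    refine Real.exp_le_exp.2 ?_
    calc t * S ω ≤ |t * S ω| := le_abs_self _
      _ = |t| * |S ω| := abs_mul _ _
      _ ≤ |t| * R := mul_le_mul_of_nonneg_left hω (abs_nonneg _)
  -- mgf of sums
  have hmgf_sum : ∀ (t : ℝ) (s : Finset (Fin n)),
      mgf (fun ω => ∑ j ∈ s, X j ω) μ t = ∏ j ∈ s, mgf (X j) μ t := by
    intro t s
    induction s using Finset.cons_induction with
    | empty => simp [mgf]
    | cons k s hk ih =>
      have hind : IndepFun (fun ω => ∑ j ∈ s, X j ω) (X k) μ :=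
        my_indep_sum δ θ hmeasδ hmeasθ hindep g hg s k hk
      have hsm : Measurable (fun ω => ∑ j ∈ s, X j ω) :=
        Finset.measurable_sum _ fun j _ => hXm j
      simp_rw [Finset.sum_cons, Finset.prod_cons]
      rw [show (fun ω => X k ω + ∑ j ∈ s, X j ω)
          = (X k + fun ω => ∑ j ∈ s, X j ω) from rfl,
        IndepFun.mgf_add' hind.symm (hXm k).aestronglyMeasurable
          hsm.aestronglyMeasurable, ih]
  set C : ℝ := ∑ k, (c k) ^ 2 with hCdef
  have hmgfS : ∀ t : ℝ, mgf S μ t ≤ Real.exp (t ^ 2 * C / 2) := by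
    intro t
    calc mgf S μ t = ∏ k, mgf (X k) μ t := hmgf_sum t Finset.univ
      _ ≤ ∏ k, Real.exp (t ^ 2 * (c k) ^ 2 / 2) :=
          Finset.prod_le_prod (fun k _ => mgf_nonneg) (fun k _ => hXmgf k t)
      _ = Real.exp (∑ k, t ^ 2 * (c k) ^ 2 / 2) := by rw [Real.exp_sum]
      _ = Real.exp (t ^ 2 * C / 2) := by
          congr 1
          rw [hCdef, Finset.mul_sum, Finset.sum_div]
  -- main case split
  set P : ℝ := ∑ k, (x k * y k) ^ 2 with hPdef
  set T : ℝ := Real.sqrt P * Real.sqrt (2 * Real.log (2 / ε)) * (u * (2 + u)) with hTdef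
  have hP0 : 0 ≤ P := Finset.sum_nonneg fun k _ => sq_nonneg _
  have hT0 : 0 ≤ T := by
    apply mul_nonneg (mul_nonneg (Real.sqrt_nonneg _) (Real.sqrt_nonneg _)) hK.le
  rcases eq_or_lt_of_le hP0 with hP | hP
  · -- P = 0 : all x k * y k = 0
    have hzero : ∀ k, x k * y k = 0 := by
      intro k
      have := (Finset.sum_eq_zero_iff_of_nonneg
        (fun k _ => sq_nonneg (x k * y k))).1 hP.symm k (Finset.mem_univ k)
      exact (pow_eq_zero_iff two_ne_zero).1 this
    have huniv : {ω | |(∑ k, ((1 + δ k ω) * x k) * ((1 + θ k ω) * y k)) -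
        ∑ k, x k * y k| ≤ T} = Set.univ := by
      apply Set.eq_univ_of_forall
      intro ω
      simp only [Set.mem_setOf_eq, hptw ω]
      have : S ω = 0 := by
        rw [hSdef]
        exact Finset.sum_eq_zero fun k _ => by simp [hXdef, hgdef, hzero k]
      rw [this, abs_zero]
      exact hT0
    rw [huniv, measure_univ]
    calc ENNReal.ofReal (1 - ε) ≤ ENNReal.ofReal 1 :=
        ENNReal.ofReal_le_ofReal (by linarith)
      _ = 1 := ENNReal.ofReal_one
  · -- P > 0
    have hC0 : 0 < C := by
      have : C = P * (u * (2 + u)) ^ 2 := by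
        rw [hCdef, hPdef, Finset.sum_mul]
        exact Finset.sum_congr rfl fun k _ => by
          rw [hcdef, mul_pow, sq_abs]
      rw [this]
      positivity
    have hCeq : C = P * (u * (2 + u)) ^ 2 := by
      rw [hCdef, hPdef, Finset.sum_mul]
      exact Finset.sum_congr rfl fun k _ => by rw [hcdef, mul_pow, sq_abs]
    have hT2 : T ^ 2 = P * (2 * Real.log (2 / ε)) * (u * (2 + u)) ^ 2 := by
      rw [hTdef, mul_pow, mul_pow, Real.sq_sqrt hP0, Real.sq_sqrt hL]
    have hTC : T ^ 2 / (2 * C) = Real.log (2 / ε) := by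
      rw [hT2, hCeq]
      field_simp
    have hexp : Real.exp (-(T ^ 2 / (2 * C))) = ε / 2 := by
      rw [hTC, Real.exp_neg, Real.exp_log (by positivity), inv_div]
    -- tails
    have htail1 : (μ {ω | T ≤ S ω}).toReal ≤ ε / 2 := by
      rw [← hexp]
      exact my_chernoff hC0 hT0 (hSint _) (hmgfS _)
    have htail2 : (μ {ω | T ≤ -S ω}).toReal ≤ ε / 2 := by
      rw [← hexp]
      refine my_chernoff (S := fun ω => -S ω) hC0 hT0 ?_ ?_
      · simpa [mul_neg, neg_mul] using hSint (-(T / C))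
      · rw [show (fun ω => -S ω) = -S from rfl, mgf_neg]
        calc mgf S μ (-(T / C)) ≤ Real.exp ((-(T / C)) ^ 2 * C / 2) := hmgfS _
          _ = Real.exp ((T / C) ^ 2 * C / 2) := by ring_nf
    have htail1' : μ {ω | T ≤ S ω} ≤ ENNReal.ofReal (ε / 2) :=
      (ENNReal.le_ofReal_iff_toReal_le (measure_ne_top μ _) (by positivity)).2 htail1
    have htail2' : μ {ω | T ≤ -S ω} ≤ ENNReal.ofReal (ε / 2) :=
      (ENNReal.le_ofReal_iff_toReal_le (measure_ne_top μ _) (by positivity)).2 htail2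
    -- event
    set A : Set Ω := {ω | |S ω| ≤ T} with hAdef
    have hAmeas : MeasurableSet A := measurableSet_le hSm.abs measurable_const
    have hAc : Aᶜ ⊆ {ω | T ≤ S ω} ∪ {ω | T ≤ -S ω} := by
      intro ω hω
      simp only [hAdef, Set.mem_compl_iff, Set.mem_setOf_eq, not_le] at hω
      rcases abs_cases (S ω) with ⟨h, _⟩ | ⟨h, _⟩
      · left; exact le_of_lt (h ▸ hω)
      · right; exact le_of_lt (h ▸ hω)
    have hAcle : μ Aᶜ ≤ ENNReal.ofReal ε := by
      calc μ Aᶜ ≤ μ ({ω | T ≤ S ω} ∪ {ω | T ≤ -S ω}) := measure_mono hAc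
        _ ≤ μ {ω | T ≤ S ω} + μ {ω | T ≤ -S ω} := measure_union_le _ _
        _ ≤ ENNReal.ofReal (ε / 2) + ENNReal.ofReal (ε / 2) :=
            add_le_add htail1' htail2'
        _ = ENNReal.ofReal ε := by
            rw [← ENNReal.ofReal_add (by positivity) (by positivity)]
            norm_num
    have hset : {ω | |(∑ k, ((1 + δ k ω) * x k) * ((1 + θ k ω) * y k)) -
        ∑ k, x k * y k| ≤ T} = A := by
      ext ω
      simp only [Set.mem_setOf_eq, hAdef, hptw ω]
    rw [hset]
    have hsum : μ A + μ Aᶜ = 1 := by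
      rw [measure_add_measure_compl hAmeas, measure_univ]
    have key : ENNReal.ofReal (1 - ε) + ENNReal.ofReal ε ≤ μ A + ENNReal.ofReal ε := by
      rw [← ENNReal.ofReal_add (by linarith) hε0.le]
      have h1 : ENNReal.ofReal (1 - ε + ε) = 1 := by
        norm_num
      rw [h1, ← hsum]
      exact add_le_add le_rfl hAcle
    exact (ENNReal.add_le_add_iff_right ENNReal.ofReal_ne_top).1 key
end

section
/- In the step-by-step roundoff model with |δ_j| ≤ u for 1 ≤ j ≤ 2n−1, the total forward error satisfies |ŝ_{2n} − x^T y| ≤ √(2n−1) · √(Σ_{k=1}^{2n−1} c_k²) · u, where c_{2k−1} = |x_1y_1|(1+u)^{k−1} + Σ_{j=2}^k |x_j y_j|(1+u)^{k−j+1} and c_{2k−2} = |x_k y_k|. -/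
theorem stepwise_model_forward_error_bound (n : ℕ) (hn : 1 ≤ n)
    (x y δ : ℕ → ℝ) (u : ℝ) (hu : 0 < u)
    (hδ : ∀ j, 1 ≤ j → j ≤ 2 * n - 1 → |δ j| ≤ u)
    (shat : ℕ → ℝ)
    (hs1 : shat 1 = x 1 * y 1)
    (hsodd : ∀ k, 2 ≤ k → k ≤ n →
      shat (2 * k - 1) = shat (2 * k - 2) + x k * y k * (1 + δ (2 * k - 2)))
    (hseven : ∀ k, 1 ≤ k → k ≤ n → shat (2 * k) = shat (2 * k - 1) * (1 + δ (2 * k - 1)))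
    (c : ℕ → ℝ)
    (hcodd : ∀ k, 1 ≤ k → k ≤ n →
      c (2 * k - 1) = |x 1 * y 1| * (1 + u) ^ (k - 1) +
        ∑ j ∈ Finset.Icc 2 k, |x j * y j| * (1 + u) ^ (k - j + 1))
    (hceven : ∀ k, 2 ≤ k → k ≤ n → c (2 * k - 2) = |x k * y k|) :
    |shat (2 * n) - ∑ k ∈ Finset.Icc 1 n, x k * y k| ≤
      Real.sqrt (2 * n - 1) *
        Real.sqrt (∑ k ∈ Finset.Icc 1 (2 * n - 1), (c k) ^ 2) * u := by
  have hone : ∀ j, 1 ≤ j → j ≤ 2 * n - 1 → |1 + δ j| ≤ 1 + u := by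
    intro j h1 h2
    calc |1 + δ j| ≤ |(1:ℝ)| + |δ j| := abs_add_le _ _
    _ ≤ 1 + u := by have := hδ j h1 h2; rw [abs_one]; linarith
  have key : ∀ m, 1 ≤ m → m ≤ n →
      |shat (2 * m - 1)| ≤ c (2 * m - 1) ∧
      |shat (2 * m) - ∑ k ∈ Finset.Icc 1 m, x k * y k| ≤
        u * ∑ k ∈ Finset.Icc 1 (2 * m - 1), c k := by
    intro m hm
    induction m, hm using Nat.le_induction with
    | base =>
      intro _
      have hc1 : c 1 = |x 1 * y 1| := by
        have h := hcodd 1 le_rfl hn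
        simpa using h
      constructor
      · simp only [show 2 * 1 - 1 = 1 from rfl, hc1, hs1, le_refl]
      · have h2 : shat 2 = shat 1 * (1 + δ 1) := by
          simpa using hseven 1 le_rfl hn
        have : shat 2 - x 1 * y 1 = x 1 * y 1 * δ 1 := by
          rw [h2, hs1]; ring
        simp only [show 2 * 1 = 2 from rfl, show 2 * 1 - 1 = 1 from rfl,
          Finset.Icc_self, Finset.sum_singleton, hc1, this]
        rw [abs_mul]
        have hd := hδ 1 le_rfl (by omega)
        have h0 : (0:ℝ) ≤ |x 1 * y 1| := abs_nonneg _
        nlinarith [abs_nonneg (δ 1)]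
    | succ m hm IH =>
      intro hmn
      obtain ⟨A, B⟩ := IH (by omega)
      -- bounds on |1+δ| for indices used
      have hd1 : |1 + δ (2 * m - 1)| ≤ 1 + u := hone _ (by omega) (by omega)
      have hd2 : |δ (2 * m)| ≤ u := hδ _ (by omega) (by omega)
      have hd3 : |δ (2 * m + 1)| ≤ u := hδ _ (by omega) (by omega)
      -- shat (2m) bound
      have hse : shat (2 * m) = shat (2 * m - 1) * (1 + δ (2 * m - 1)) :=
        hseven m (by omega) (by omega)
      have hAc : (0:ℝ) ≤ c (2 * m - 1) := le_trans (abs_nonneg _) A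
      have hs2m : |shat (2 * m)| ≤ c (2 * m - 1) * (1 + u) := by
        rw [hse, abs_mul]
        exact mul_le_mul A hd1 (abs_nonneg _) hAc
      -- shat (2m+1)
      have hso : shat (2 * (m + 1) - 1) =
          shat (2 * m) + x (m+1) * y (m+1) * (1 + δ (2 * m)) := by
        have h := hsodd (m+1) (by omega) hmn
        have e1 : 2 * (m + 1) - 2 = 2 * m := by omega
        rw [e1] at h; exact h
      have hxk : |x (m+1) * y (m+1) * (1 + δ (2 * m))| ≤ |x (m+1) * y (m+1)| * (1 + u) := by
        rw [abs_mul]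
        exact mul_le_mul_of_nonneg_left (hone _ (by omega) (by omega)) (abs_nonneg _)
      -- the key identity for c
      have hcid : c (2 * (m+1) - 1) = c (2 * m - 1) * (1 + u) + |x (m+1) * y (m+1)| * (1 + u) := by
        rw [hcodd (m+1) (by omega) hmn, hcodd m (by omega) (by omega)]
        rw [Finset.sum_Icc_succ_top (by omega : 2 ≤ m + 1)]
        have e1 : (1 + u) ^ (m + 1 - 1) = (1 + u) ^ (m - 1) * (1 + u) := by
          rw [← pow_succ]; congr 1; omega
        have e2 : ∀ j ∈ Finset.Icc 2 m, |x j * y j| * (1 + u) ^ (m + 1 - j + 1)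
            = (|x j * y j| * (1 + u) ^ (m - j + 1)) * (1 + u) := by
          intro j hj
          rw [Finset.mem_Icc] at hj
          rw [mul_assoc, ← pow_succ]
          congr 2
          omega
        rw [Finset.sum_congr rfl e2, e1, ← Finset.sum_mul]
        have e3 : m + 1 - (m + 1) + 1 = 1 := by omega
        rw [e3, pow_one]
        ring
      have hA' : |shat (2 * (m+1) - 1)| ≤ c (2 * (m+1) - 1) := by
        rw [hso, hcid]
        calc |shat (2*m) + x (m+1) * y (m+1) * (1 + δ (2*m))|
            ≤ |shat (2*m)| + |x (m+1) * y (m+1) * (1 + δ (2*m))| := abs_add_le _ _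
          _ ≤ c (2 * m - 1) * (1 + u) + |x (m+1) * y (m+1)| * (1 + u) := add_le_add hs2m hxk
      refine ⟨hA', ?_⟩
      -- part B
      have hse' : shat (2 * (m+1)) = shat (2 * (m+1) - 1) * (1 + δ (2 * (m+1) - 1)) :=
        hseven (m+1) (by omega) hmn
      have e4 : 2 * (m + 1) - 1 = 2 * m + 1 := by omega
      have hsum : ∑ k ∈ Finset.Icc 1 (m+1), x k * y k
          = (∑ k ∈ Finset.Icc 1 m, x k * y k) + x (m+1) * y (m+1) :=
        Finset.sum_Icc_succ_top (by omega) _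
      -- error decomposition
      have hdecomp : shat (2 * (m+1)) - ∑ k ∈ Finset.Icc 1 (m+1), x k * y k
          = (shat (2 * m) - ∑ k ∈ Finset.Icc 1 m, x k * y k)
            + x (m+1) * y (m+1) * δ (2 * m)
            + shat (2 * (m+1) - 1) * δ (2 * (m+1) - 1) := by
        rw [hse', hsum]
        nth_rewrite 1 [hso]
        rw [hso]
        ring
      have hcev : c (2 * m) = |x (m+1) * y (m+1)| := by
        have h := hceven (m+1) (by omega) hmn
        have e : 2 * (m + 1) - 2 = 2 * m := by omega
        rwa [e] at h
      have hAc' : (0:ℝ) ≤ c (2 * (m+1) - 1) := le_trans (abs_nonneg _) hA'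
      have hsumc : ∑ k ∈ Finset.Icc 1 (2 * (m+1) - 1), c k
          = (∑ k ∈ Finset.Icc 1 (2 * m - 1), c k) + c (2 * m) + c (2 * m + 1) := by
        rw [e4]
        rw [Finset.sum_Icc_succ_top (by omega : 1 ≤ 2 * m + 1) c]
        rw [show (2 * m) = (2 * m - 1) + 1 by omega,
          Finset.sum_Icc_succ_top (by omega : 1 ≤ 2 * m - 1 + 1) c]
        rw [show (2 * m - 1 + 1) = 2 * m by omega]
      rw [hdecomp, hsumc]
      have t1 : |x (m+1) * y (m+1) * δ (2 * m)| ≤ u * c (2 * m) := by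
        rw [abs_mul, hcev, mul_comm u _]
        exact mul_le_mul_of_nonneg_left hd2 (abs_nonneg _)
      have t2 : |shat (2 * (m+1) - 1) * δ (2 * (m+1) - 1)| ≤ u * c (2 * m + 1) := by
        rw [abs_mul, e4] at *
        calc |shat (2 * m + 1)| * |δ (2 * m + 1)|
            ≤ c (2 * m + 1) * u := mul_le_mul hA' hd3 (abs_nonneg _) hAc'
          _ = u * c (2 * m + 1) := mul_comm _ _
      calc |(shat (2 * m) - ∑ k ∈ Finset.Icc 1 m, x k * y k)
            + x (m+1) * y (m+1) * δ (2 * m)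
            + shat (2 * (m+1) - 1) * δ (2 * (m+1) - 1)|
          ≤ |(shat (2 * m) - ∑ k ∈ Finset.Icc 1 m, x k * y k)
            + x (m+1) * y (m+1) * δ (2 * m)|
            + |shat (2 * (m+1) - 1) * δ (2 * (m+1) - 1)| := abs_add_le _ _
        _ ≤ |shat (2 * m) - ∑ k ∈ Finset.Icc 1 m, x k * y k|
            + |x (m+1) * y (m+1) * δ (2 * m)|
            + |shat (2 * (m+1) - 1) * δ (2 * (m+1) - 1)| := by
              have := abs_add_le (shat (2 * m) - ∑ k ∈ Finset.Icc 1 m, x k * y k)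
                (x (m+1) * y (m+1) * δ (2 * m))
              linarith
        _ ≤ u * (∑ k ∈ Finset.Icc 1 (2 * m - 1), c k) + u * c (2 * m) + u * c (2 * m + 1) := by
              exact add_le_add (add_le_add B t1) t2
        _ = u * ((∑ k ∈ Finset.Icc 1 (2 * m - 1), c k) + c (2 * m) + c (2 * m + 1)) := by ring
  obtain ⟨_, hB⟩ := key n hn le_rfl
  -- Cauchy-Schwarz
  set S := Finset.Icc 1 (2 * n - 1) with hS
  have hcs : ∑ k ∈ S, c k ≤ Real.sqrt (2 * n - 1) * Real.sqrt (∑ k ∈ S, (c k) ^ 2) := by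
    have h1 : (∑ k ∈ S, 1 * c k) ^ 2 ≤ (∑ k ∈ S, (1:ℝ) ^ 2) * ∑ k ∈ S, (c k) ^ 2 :=
      Finset.sum_mul_sq_le_sq_mul_sq S _ _
    have h2 : (∑ k ∈ S, (1:ℝ) ^ 2) = (2 * n - 1 : ℝ) := by
      simp only [one_pow, Finset.sum_const, nsmul_eq_mul, mul_one]
      rw [hS, Nat.card_Icc]
      push_cast [Nat.cast_sub (by omega : 1 ≤ 2 * n)]
      ring
    simp only [one_mul] at h1
    rw [h2] at h1
    calc ∑ k ∈ S, c k ≤ |∑ k ∈ S, c k| := le_abs_self _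
      _ = Real.sqrt ((∑ k ∈ S, c k) ^ 2) := (Real.sqrt_sq_eq_abs _).symm
      _ ≤ Real.sqrt ((2 * n - 1 : ℝ) * ∑ k ∈ S, (c k) ^ 2) := Real.sqrt_le_sqrt h1
      _ = Real.sqrt (2 * n - 1) * Real.sqrt (∑ k ∈ S, (c k) ^ 2) := Real.sqrt_mul (by
            have : (1:ℝ) ≤ n := by exact_mod_cast hn
            linarith) _
  calc |shat (2 * n) - ∑ k ∈ Finset.Icc 1 n, x k * y k|
      ≤ u * ∑ k ∈ S, c k := hB
    _ ≤ u * (Real.sqrt (2 * n - 1) * Real.sqrt (∑ k ∈ S, (c k) ^ 2)) :=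
        mul_le_mul_of_nonneg_left hcs hu.le
    _ = Real.sqrt (2 * n - 1) * Real.sqrt (∑ k ∈ S, (c k) ^ 2) * u := by ring
end
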